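/- Let R₁ = [[1,0,0,0],[0,1,0,0],[0,0,1,0]] and R₂ = [[0,1,0,0],[0,0,1,0],[0,0,0,1]] be real 3×4 matrices, and define the Hermitian 7×7 matrices H₁ = [[0, R₁],[R₁ᵀ, 0]], H₂ = [[0, R₂],[R₂ᵀ, 0]], H₃ = [[I₃, 0],[0, −I₄]]. Then every nonzero real linear combination c₁H₁ + c₂H₂ + c₃H₃ has at least 3 positive and at least 3 negative eigenvalues. -/

import Mathlib

open Matrix

open scoped RealInnerProductSpace

noncomputable def R1 : Matrix (Fin 3) (Fin 4) ℝ :=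
  !![1, 0, 0, 0; 0, 1, 0, 0; 0, 0, 1, 0]

noncomputable def R2 : Matrix (Fin 3) (Fin 4) ℝ :=
  !![0, 1, 0, 0; 0, 0, 1, 0; 0, 0, 0, 1]

noncomputable def Hmat : Fin 3 → Matrix (Fin 3 ⊕ Fin 4) (Fin 3 ⊕ Fin 4) ℝ :=
  ![Matrix.fromBlocks 0 R1 R1ᵀ 0,
    Matrix.fromBlocks 0 R2 R2ᵀ 0,
    Matrix.fromBlocks 1 0 0 (-1)]

section Aux

variable {n : Type*} [Fintype n] [DecidableEq n]

lemma expand_quad (A : Matrix n n ℝ) (hA : A.IsHermitian) (v : EuclideanSpace ℝ n) :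
    ⟪v, (WithLp.toLp 2 (A *ᵥ v) : EuclideanSpace ℝ n)⟫
      = ∑ i, hA.eigenvalues i * (hA.eigenvectorBasis.repr v i)^2 := by
  set b := hA.eigenvectorBasis
  have hv : (WithLp.toLp 2 (A *ᵥ v) : EuclideanSpace ℝ n)
      = ∑ i, (b.repr v i * hA.eigenvalues i) • (b i : EuclideanSpace ℝ n) := by
    rw [show (WithLp.toLp 2 (A *ᵥ v) : EuclideanSpace ℝ n) = Matrix.toEuclideanLin A v from rfl]
    conv_lhs => rw [← b.sum_repr v]
    rw [map_sum]
    refine Finset.sum_congr rfl fun i _ => ?_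
    rw [_root_.map_smul]
    have h : Matrix.toEuclideanLin A (b i) = hA.eigenvalues i • (b i) := by
      rw [show Matrix.toEuclideanLin A (b i) = WithLp.toLp 2 (A *ᵥ (b i)) from rfl,
        hA.mulVec_eigenvectorBasis i]
      rfl
    rw [h, smul_smul]
  rw [hv, inner_sum]
  refine Finset.sum_congr rfl fun i _ => ?_
  rw [real_inner_smul_right, real_inner_comm, ← b.repr_apply_apply]
  ring

lemma key_pos (A : Matrix n n ℝ) (hA : A.IsHermitian) (k : ℕ)
    (φ : (Fin k → ℝ) →ₗ[ℝ] EuclideanSpace ℝ n)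
    (hφ : ∀ x : Fin k → ℝ, x ≠ 0 → 0 < ⟪φ x, (WithLp.toLp 2 (A *ᵥ φ x) : EuclideanSpace ℝ n)⟫) :
    k ≤ (Finset.univ.filter fun i => 0 < hA.eigenvalues i).card := by
  classical
  by_contra hlt
  push_neg at hlt
  set b := hA.eigenvectorBasis with hb
  let ψ : (Fin k → ℝ) →ₗ[ℝ] ({i : n // 0 < hA.eigenvalues i} → ℝ) :=
  { toFun := fun x j => b.repr (φ x) j.1
    map_add' := by intro x y; funext j; simp
    map_smul' := by intro r x; funext j; simp }
  have hker : ∃ x, x ≠ 0 ∧ ψ x = 0 := by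
    by_contra h
    push_neg at h
    have hinj : Function.Injective ψ := by
      rw [← LinearMap.ker_eq_bot, LinearMap.ker_eq_bot']
      intro m hm
      by_contra hm0
      exact h m hm0 hm
    have hle := LinearMap.finrank_le_finrank_of_injective hinj
    rw [Module.finrank_pi, Module.finrank_pi] at hle
    rw [Fintype.card_subtype, Fintype.card_fin] at hle
    omega
  obtain ⟨x, hx0, hψ⟩ := hker
  have h1 := hφ x hx0
  rw [expand_quad A hA (φ x)] at h1
  have h2 : ∑ i, hA.eigenvalues i * (b.repr (φ x) i)^2 ≤ 0 := by
    apply Finset.sum_nonpos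
    intro i _
    by_cases hi : 0 < hA.eigenvalues i
    · have hz : b.repr (φ x) i = 0 := congrFun hψ ⟨i, hi⟩
      simp [hz]
    · push_neg at hi
      nlinarith [sq_nonneg (b.repr (φ x) i)]
  rw [hb] at h2
  linarith

lemma key_neg (A : Matrix n n ℝ) (hA : A.IsHermitian) (k : ℕ)
    (φ : (Fin k → ℝ) →ₗ[ℝ] EuclideanSpace ℝ n)
    (hφ : ∀ x : Fin k → ℝ, x ≠ 0 → ⟪φ x, (WithLp.toLp 2 (A *ᵥ φ x) : EuclideanSpace ℝ n)⟫ < 0) :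
    k ≤ (Finset.univ.filter fun i => hA.eigenvalues i < 0).card := by
  classical
  by_contra hlt
  push_neg at hlt
  set b := hA.eigenvectorBasis with hb
  let ψ : (Fin k → ℝ) →ₗ[ℝ] ({i : n // hA.eigenvalues i < 0} → ℝ) :=
  { toFun := fun x j => b.repr (φ x) j.1
    map_add' := by intro x y; funext j; simp
    map_smul' := by intro r x; funext j; simp }
  have hker : ∃ x, x ≠ 0 ∧ ψ x = 0 := by
    by_contra h
    push_neg at h
    have hinj : Function.Injective ψ := by
      rw [← LinearMap.ker_eq_bot, LinearMap.ker_eq_bot']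
      intro m hm
      by_contra hm0
      exact h m hm0 hm
    have hle := LinearMap.finrank_le_finrank_of_injective hinj
    rw [Module.finrank_pi, Module.finrank_pi] at hle
    rw [Fintype.card_subtype, Fintype.card_fin] at hle
    omega
  obtain ⟨x, hx0, hψ⟩ := hker
  have h1 := hφ x hx0
  rw [expand_quad A hA (φ x)] at h1
  have h2 : (0:ℝ) ≤ ∑ i, hA.eigenvalues i * (b.repr (φ x) i)^2 := by
    apply Finset.sum_nonneg
    intro i _
    by_cases hi : hA.eigenvalues i < 0
    · have hz : b.repr (φ x) i = 0 := congrFun hψ ⟨i, hi⟩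
      simp [hz]
    · push_neg at hi
      positivity
  rw [hb] at h2
  linarith

end Aux

noncomputable def vE (x : Fin 3 → ℝ) (y : Fin 4 → ℝ) : EuclideanSpace ℝ (Fin 3 ⊕ Fin 4) :=
  WithLp.toLp 2 (Sum.elim x y)

lemma quad (c : Fin 3 → ℝ) (x : Fin 3 → ℝ) (y : Fin 4 → ℝ) :
    ⟪vE x y, (WithLp.toLp 2 ((∑ j, c j • Hmat j) *ᵥ vE x y) : EuclideanSpace ℝ (Fin 3 ⊕ Fin 4))⟫
    = c 2 * (x 0 ^ 2 + x 1 ^ 2 + x 2 ^ 2) - c 2 * (y 0 ^ 2 + y 1 ^ 2 + y 2 ^ 2 + y 3 ^ 2)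
      + 2 * (x 0 * (c 0 * y 0 + c 1 * y 1) + x 1 * (c 0 * y 1 + c 1 * y 2)
        + x 2 * (c 0 * y 2 + c 1 * y 3)) := by
  simp [vE, PiLp.inner_apply, Matrix.mulVec, dotProduct, Fintype.sum_sum_type,
    Fin.sum_univ_succ, Hmat, R1, R2, Fin.sum_univ_three, Matrix.fromBlocks,
    Matrix.one_apply, Matrix.transpose_apply, Matrix.vecHead, Matrix.vecTail]
  norm_num [show ((3:Fin 4):ℕ) = 3 from rfl]
  ring

noncomputable def phiL (B : Matrix (Fin 4) (Fin 3) ℝ) :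
    (Fin 3 → ℝ) →ₗ[ℝ] EuclideanSpace ℝ (Fin 3 ⊕ Fin 4) where
  toFun x := vE x (B *ᵥ x)
  map_add' x y := by
    ext s
    cases s <;> simp [vE, Matrix.mulVec_add]
  map_smul' r x := by
    ext s
    cases s <;> simp [vE, Matrix.mulVec_smul]

noncomputable def phiR : (Fin 4 → ℝ) →ₗ[ℝ] EuclideanSpace ℝ (Fin 3 ⊕ Fin 4) where
  toFun y := vE 0 y
  map_add' x y := by
    ext s
    cases s <;> simp [vE]
  map_smul' r x := by
    ext s
    cases s <;> simp [vE]

noncomputable def Bm (p q : ℝ) : Matrix (Fin 4) (Fin 3) ℝ :=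
  !![p, 0, 0; q, p, 0; 0, q, p; 0, 0, q]

lemma sumsq3_pos (x : Fin 3 → ℝ) (hx : x ≠ 0) : 0 < x 0 ^ 2 + x 1 ^ 2 + x 2 ^ 2 := by
  have h0 : (0:ℝ) ≤ x 0 ^ 2 + x 1 ^ 2 + x 2 ^ 2 := by positivity
  rcases h0.lt_or_eq with h | h
  · exact h
  exfalso; apply hx
  have s0 := sq_nonneg (x 0); have s1 := sq_nonneg (x 1); have s2 := sq_nonneg (x 2)
  have e0 : x 0 = 0 := by
    have : x 0 ^ 2 = 0 := by nlinarith
    exact pow_eq_zero_iff (by norm_num : (2:ℕ) ≠ 0) |>.mp this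
  have e1 : x 1 = 0 := by
    have : x 1 ^ 2 = 0 := by nlinarith
    exact pow_eq_zero_iff (by norm_num : (2:ℕ) ≠ 0) |>.mp this
  have e2 : x 2 = 0 := by
    have : x 2 ^ 2 = 0 := by nlinarith
    exact pow_eq_zero_iff (by norm_num : (2:ℕ) ≠ 0) |>.mp this
  funext i; fin_cases i <;> simp [e0, e1, e2]

lemma sumsq4_pos (y : Fin 4 → ℝ) (hy : y ≠ 0) :
    0 < y 0 ^ 2 + y 1 ^ 2 + y 2 ^ 2 + y 3 ^ 2 := by
  have h0 : (0:ℝ) ≤ y 0 ^ 2 + y 1 ^ 2 + y 2 ^ 2 + y 3 ^ 2 := by positivity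
  rcases h0.lt_or_eq with h | h
  · exact h
  exfalso; apply hy
  have s0 := sq_nonneg (y 0); have s1 := sq_nonneg (y 1)
  have s2 := sq_nonneg (y 2); have s3 := sq_nonneg (y 3)
  have e0 : y 0 = 0 := by
    have : y 0 ^ 2 = 0 := by nlinarith
    exact pow_eq_zero_iff (by norm_num : (2:ℕ) ≠ 0) |>.mp this
  have e1 : y 1 = 0 := by
    have : y 1 ^ 2 = 0 := by nlinarith
    exact pow_eq_zero_iff (by norm_num : (2:ℕ) ≠ 0) |>.mp this
  have e2 : y 2 = 0 := by
    have : y 2 ^ 2 = 0 := by nlinarith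
    exact pow_eq_zero_iff (by norm_num : (2:ℕ) ≠ 0) |>.mp this
  have e3 : y 3 = 0 := by
    have : y 3 ^ 2 = 0 := by nlinarith
    exact pow_eq_zero_iff (by norm_num : (2:ℕ) ≠ 0) |>.mp this
  funext i; fin_cases i <;> simp [e0, e1, e2, e3]

lemma ker_pos (p q : ℝ) (x : Fin 3 → ℝ) (hpq : ¬(p = 0 ∧ q = 0)) (hx : x ≠ 0) :
    0 < (p * x 0) ^ 2 + (q * x 0 + p * x 1) ^ 2 + (q * x 1 + p * x 2) ^ 2
      + (q * x 2) ^ 2 := by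
  have h0 : (0:ℝ) ≤ (p * x 0) ^ 2 + (q * x 0 + p * x 1) ^ 2 + (q * x 1 + p * x 2) ^ 2
      + (q * x 2) ^ 2 := by positivity
  rcases h0.lt_or_eq with h | h
  · exact h
  exfalso
  have s1 := sq_nonneg (p * x 0); have s2 := sq_nonneg (q * x 0 + p * x 1)
  have s3 := sq_nonneg (q * x 1 + p * x 2); have s4 := sq_nonneg (q * x 2)
  have e1 : p * x 0 = 0 := by nlinarith
  have e2 : q * x 0 + p * x 1 = 0 := by nlinarith
  have e3 : q * x 1 + p * x 2 = 0 := by nlinarith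
  have e4 : q * x 2 = 0 := by nlinarith
  apply hx
  by_cases hp : p = 0
  · have hq : q ≠ 0 := fun hq => hpq ⟨hp, hq⟩
    subst hp
    have hx2 : x 2 = 0 := by
      rcases mul_eq_zero.mp e4 with h' | h'; exact absurd h' hq; exact h'
    have hx1 : x 1 = 0 := by
      have : q * x 1 = 0 := by linarith [e3]
      rcases mul_eq_zero.mp this with h' | h'; exact absurd h' hq; exact h'
    have hx0 : x 0 = 0 := by
      have : q * x 0 = 0 := by linarith [e2]
      rcases mul_eq_zero.mp this with h' | h'; exact absurd h' hq; exact h'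
    funext i; fin_cases i <;> simp [hx0, hx1, hx2]
  · have hx0 : x 0 = 0 := by
      rcases mul_eq_zero.mp e1 with h' | h'; exact absurd h' hp; exact h'
    have hx1 : x 1 = 0 := by
      have : p * x 1 = 0 := by rw [hx0] at e2; linarith [e2]
      rcases mul_eq_zero.mp this with h' | h'; exact absurd h' hp; exact h'
    have hx2 : x 2 = 0 := by
      have : p * x 2 = 0 := by rw [hx1] at e3; linarith [e3]
      rcases mul_eq_zero.mp this with h' | h'; exact absurd h' hp; exact h'
    funext i; fin_cases i <;> simp [hx0, hx1, hx2]

/-- Every nonzero real linear combination `c₁H₁ + c₂H₂ + c₃H₃` of the symmetric `7×7`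
matrices built from `R₁, R₂` has at least 3 positive and at least 3 negative
eigenvalues (with multiplicity). -/
theorem stmt12 (c : Fin 3 → ℝ) (hc : c ≠ 0)
    (M : Matrix (Fin 3 ⊕ Fin 4) (Fin 3 ⊕ Fin 4) ℝ)
    (hM : M = ∑ j, c j • Hmat j) :
    ∃ hHerm : M.IsHermitian,
      3 ≤ (Finset.univ.filter fun i => 0 < hHerm.eigenvalues i).card ∧
      3 ≤ (Finset.univ.filter fun i => hHerm.eigenvalues i < 0).card := by
  subst hM
  have hH : ∀ j, (Hmat j).IsHermitian := by
    intro j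
    fin_cases j
    · refine Matrix.IsHermitian.fromBlocks Matrix.isHermitian_zero ?_ Matrix.isHermitian_zero
      ext i j; simp [Matrix.conjTranspose_apply]
    · refine Matrix.IsHermitian.fromBlocks Matrix.isHermitian_zero ?_ Matrix.isHermitian_zero
      ext i j; simp [Matrix.conjTranspose_apply]
    · refine Matrix.IsHermitian.fromBlocks Matrix.isHermitian_one ?_ Matrix.isHermitian_one.neg
      simp
  have hsm : ∀ (r : ℝ) (j : Fin 3), (r • Hmat j).IsHermitian := by
    intro r j
    have := hH j
    rw [Matrix.IsHermitian] at this ⊢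
    rw [Matrix.conjTranspose_smul, this]
    simp
  have hHerm : (∑ j, c j • Hmat j).IsHermitian := by
    rw [Fin.sum_univ_three]
    exact ((hsm (c 0) 0).add (hsm (c 1) 1)).add (hsm (c 2) 2)
  refine ⟨hHerm, ?_, ?_⟩
  · -- positive eigenvalues
    rcases lt_trichotomy (c 2) 0 with ha | ha | ha
    · have h4 := key_pos _ hHerm 4 phiR ?_
      · omega
      intro y hy
      rw [show phiR y = vE 0 y from rfl, quad]
      have hs := sumsq4_pos y hy
      simp only [Pi.zero_apply]
      nlinarith
    · have hpq : ¬(c 0 = 0 ∧ c 1 = 0) := by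
        rintro ⟨h0, h1⟩
        apply hc
        funext i; fin_cases i <;> simp [h0, h1, ha]
      refine key_pos _ hHerm 3 (phiL (Bm (c 0) (c 1))) ?_
      intro x hx
      rw [show phiL (Bm (c 0) (c 1)) x = vE x (Bm (c 0) (c 1) *ᵥ x) from rfl, quad]
      have hk := ker_pos (c 0) (c 1) x hpq hx
      simp [Bm, Matrix.mulVec, dotProduct, Fin.sum_univ_three, ha]
      nlinarith [hk]
    · refine key_pos _ hHerm 3 (phiL 0) ?_
      intro x hx
      rw [show phiL 0 x = vE x (0 *ᵥ x) from rfl, quad]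
      have hs := sumsq3_pos x hx
      simp only [Matrix.zero_mulVec, Pi.zero_apply]
      nlinarith
  · -- negative eigenvalues
    rcases lt_trichotomy (c 2) 0 with ha | ha | ha
    · refine key_neg _ hHerm 3 (phiL 0) ?_
      intro x hx
      rw [show phiL 0 x = vE x (0 *ᵥ x) from rfl, quad]
      have hs := sumsq3_pos x hx
      simp only [Matrix.zero_mulVec, Pi.zero_apply]
      nlinarith
    · have hpq : ¬(c 0 = 0 ∧ c 1 = 0) := by
        rintro ⟨h0, h1⟩
        apply hc
        funext i; fin_cases i <;> simp [h0, h1, ha]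
      refine key_neg _ hHerm 3 (phiL (Bm (-(c 0)) (-(c 1)))) ?_
      intro x hx
      rw [show phiL (Bm (-(c 0)) (-(c 1))) x = vE x (Bm (-(c 0)) (-(c 1)) *ᵥ x) from rfl, quad]
      have hk := ker_pos (c 0) (c 1) x hpq hx
      simp [Bm, Matrix.mulVec, dotProduct, Fin.sum_univ_three, ha]
      nlinarith [hk]
    · have h4 := key_neg _ hHerm 4 phiR ?_
      · omega
      intro y hy
      rw [show phiR y = vE 0 y from rfl, quad]
      have hs := sumsq4_pos y hy
      simp only [Pi.zero_apply]
      nlinarith
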